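/- The Force transform T_Force, given a ballot manifest with batch size S^act_β and tabulated totals (W^tab_β, L^tab_β) with W^tab_β ≤ S^act_β and L^tab_β ≤ S^act_β, always outputs a uniquely-labeled CVR of size exactly S^act_β whose declared totals equal W^tab_β and L^tab_β. -/

import Mathlib

/-- A CVR row: an identifier (either an original identifier in `I` or a fresh symbol
`⊥_t` indexed by `ℕ`), a winner-vote entry and a loser-vote entry (overvotes allowed). -/
abbrev CVRRow (I : Type*) := (I ⊕ ℕ) × Bool × Bool

/-- Step 1 of `T_Force`: replace duplicate identifiers with fresh unused symbols `⊥_n`. -/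
def dedupRows {I : Type*} [DecidableEq (I ⊕ ℕ)]
    (seen : List (I ⊕ ℕ)) (n : ℕ) : List (CVRRow I) → List (CVRRow I)
  | [] => []
  | (i, w, l) :: rest =>
    if i ∈ seen then (Sum.inr n, w, l) :: dedupRows (Sum.inr n :: seen) (n + 1) rest
    else (i, w, l) :: dedupRows (i :: seen) n rest

/-- Flip (from the front of the list) `k` entries that differ from `b` to the value `b`. -/
def flipTo (b : Bool) : ℕ → List Bool → List Bool
  | _, [] => []
  | 0, xs => xs
  | k + 1, x :: xs => if x = b then x :: flipTo b (k + 1) xs else b :: flipTo b k xs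

/-- Steps 3/4 of `T_Force`: flip vote entries of trailing rows until the column has
exactly `target` votes. -/
def adjustCol (col : List Bool) (target : ℕ) : List Bool :=
  let c := col.count true
  if c ≤ target then (flipTo true (target - c) col.reverse).reverse
  else (flipTo false (c - target) col.reverse).reverse

/-- The Force transform `T_Force`: (1) relabel duplicate identifiers with fresh unused
symbols, (2) pad with fresh all-zero rows or truncate to reach size `S`, (3) adjust the
winner column to total `Wtab`, (4) adjust the loser column to total `Ltab`. -/
def forceCVR {I : Type*} [DecidableEq I] (S Wtab Ltab : ℕ)
    (cvr : List (CVRRow I)) : List (CVRRow I) :=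
  let fresh0 : ℕ :=
    (cvr.filterMap (fun r => match r.1 with
      | Sum.inr n => some n
      | Sum.inl _ => none)).foldr max 0 + 1
  let l1 := dedupRows [] fresh0 cvr
  let l2 := l1.take S ++
    (List.range (S - l1.length)).map
      (fun t => ((Sum.inr (fresh0 + S + t) : I ⊕ ℕ), false, false))
  let wcol := adjustCol (l2.map (fun r => r.2.1)) Wtab
  let lcol := adjustCol (l2.map (fun r => r.2.2)) Ltab
  (l2.map (fun r => r.1)).zip (wcol.zip lcol)

lemma flipTo_length (b : Bool) (k : ℕ) (xs : List Bool) :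
    (flipTo b k xs).length = xs.length := by
  induction xs generalizing k with
  | nil => cases k <;> rfl
  | cons x xs ih =>
    cases k with
    | zero => rfl
    | succ k =>
      simp only [flipTo]
      split <;> simp [ih]

lemma flipTo_count (b : Bool) (k : ℕ) (xs : List Bool) :
    (flipTo b k xs).count b = xs.count b + min k (xs.count (!b)) := by
  induction xs generalizing k with
  | nil => cases k <;> simp [flipTo]
  | cons x xs ih =>
    cases k with
    | zero => simp [flipTo]
    | succ k =>
      simp only [flipTo]
      by_cases hx : x = b
      · subst hx
        simp [List.count_cons, ih, Bool.eq_not_self]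
        omega
      · have hx' : x = !b := by cases x <;> cases b <;> simp_all
        subst hx'
        simp [List.count_cons, ih, Bool.not_eq_self]
        omega

lemma bool_count_add (l : List Bool) : l.count true + l.count false = l.length := by
  induction l with
  | nil => rfl
  | cons x xs ih => cases x <;> simp [List.count_cons] <;> omega

lemma adjustCol_length (col : List Bool) (t : ℕ) :
    (adjustCol col t).length = col.length := by
  unfold adjustCol
  dsimp only
  split <;> simp [flipTo_length]

lemma adjustCol_count (col : List Bool) (t : ℕ) (ht : t ≤ col.length) :
    (adjustCol col t).count true = t := by
  unfold adjustCol
  dsimp only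
  have hc := bool_count_add col
  split
  · next h =>
    rw [List.count_reverse, flipTo_count]
    rw [show (!true) = false from rfl, List.count_reverse, List.count_reverse]
    omega
  · next h =>
    rw [List.count_reverse]
    have hlen := flipTo_length false (col.count true - t) col.reverse
    have hfc := flipTo_count false (col.count true - t) col.reverse
    rw [show (!false) = true from rfl, List.count_reverse, List.count_reverse] at hfc
    have := bool_count_add (flipTo false (List.count true col - t) col.reverse)
    simp only [List.length_reverse] at hlen
    omega
lemma dedupRows_length {I : Type*} [DecidableEq (I ⊕ ℕ)]
    (seen : List (I ⊕ ℕ)) (n : ℕ) (rows : List (CVRRow I)) :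
    (dedupRows seen n rows).length = rows.length := by
  induction rows generalizing seen n with
  | nil => rfl
  | cons r rest ih =>
    obtain ⟨i, w, l⟩ := r
    simp only [dedupRows]
    split <;> simp [ih]

lemma dedupRows_map_snd {I : Type*} [DecidableEq (I ⊕ ℕ)]
    (seen : List (I ⊕ ℕ)) (n : ℕ) (rows : List (CVRRow I)) :
    (dedupRows seen n rows).map Prod.snd = rows.map Prod.snd := by
  induction rows generalizing seen n with
  | nil => rfl
  | cons r rest ih =>
    obtain ⟨i, w, l⟩ := r
    simp only [dedupRows]
    split <;> simp [ih]

lemma dedupRows_ids {I : Type*} [DecidableEq (I ⊕ ℕ)]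
    (seen : List (I ⊕ ℕ)) (n : ℕ) (rows : List (CVRRow I))
    (H1 : ∀ m, Sum.inr m ∈ rows.map Prod.fst → m < n)
    (H2 : ∀ m, (Sum.inr m : I ⊕ ℕ) ∈ seen → m < n) :
    ((dedupRows seen n rows).map Prod.fst).Nodup ∧
    (∀ x ∈ (dedupRows seen n rows).map Prod.fst, x ∉ seen) ∧
    (∀ m, Sum.inr m ∈ (dedupRows seen n rows).map Prod.fst → m < n + rows.length) := by
  induction rows generalizing seen n with
  | nil => simp [dedupRows]
  | cons r rest ih =>
    obtain ⟨i, w, l⟩ := r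
    rcases em (i ∈ seen) with hi | hi
    · simp only [dedupRows, if_pos hi]
      obtain ⟨h1, h2, h3⟩ := ih (Sum.inr n :: seen) (n + 1)
        (fun m hm => Nat.lt_succ_of_lt (H1 m (by simp [hm])))
        (fun m hm => by
          rcases List.mem_cons.1 hm with h | h
          · simp only [Sum.inr.injEq] at h
            omega
          · exact Nat.lt_succ_of_lt (H2 m h))
      refine ⟨?_, ?_, ?_⟩
      · simp only [List.map_cons, List.nodup_cons]
        exact ⟨fun h => (h2 _ h) List.mem_cons_self, h1⟩
      · intro x hx
        simp only [List.map_cons, List.mem_cons] at hx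
        rcases hx with rfl | hx
        · exact fun h => absurd (H2 n h) (lt_irrefl n)
        · exact fun h => (h2 x hx) (List.mem_cons_of_mem _ h)
      · intro m hm
        simp only [List.map_cons, List.mem_cons] at hm
        rcases hm with h | h
        · simp only [Sum.inr.injEq] at h
          simp only [List.length_cons]
          omega
        · have := h3 m h; simp only [List.length_cons]; omega
    · simp only [dedupRows, if_neg hi]
      obtain ⟨h1, h2, h3⟩ := ih (i :: seen) n
        (fun m hm => H1 m (by simp [hm]))
        (fun m hm => by
          rcases List.mem_cons.1 hm with h | h
          · exact H1 m (by simp [← h])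
          · exact H2 m h)
      refine ⟨?_, ?_, ?_⟩
      · simp only [List.map_cons, List.nodup_cons]
        exact ⟨fun h => (h2 _ h) List.mem_cons_self, h1⟩
      · intro x hx
        simp only [List.map_cons, List.mem_cons] at hx
        rcases hx with rfl | hx
        · exact hi
        · exact fun h => (h2 x hx) (List.mem_cons_of_mem _ h)
      · intro m hm
        simp only [List.map_cons, List.mem_cons] at hm
        rcases hm with h | h
        · have := H1 m (by simp [← h]); simp only [List.length_cons]; omega
        · have := h3 m h; simp only [List.length_cons]; omega

lemma countP_id_eq_count (l : List Bool) : l.countP (fun b => b) = l.count true := by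
  induction l with
  | nil => rfl
  | cons x xs ih => cases x <;> simp [List.countP_cons, List.count_cons, ih]

lemma mem_le_foldr_max (l : List ℕ) (a : ℕ) (h : a ∈ l) : a ≤ l.foldr max 0 := by
  induction l with
  | nil => simp at h
  | cons x xs ih =>
    rcases List.mem_cons.1 h with rfl | h
    · exact le_max_left _ _
    · exact le_trans (ih h) (le_max_right _ _)

lemma force_aux {I : Type*} [DecidableEq I] (S Wtab Ltab F : ℕ)
    (hW : Wtab ≤ S) (hL : Ltab ≤ S) (cvr : List (CVRRow I))
    (hF : ∀ m, Sum.inr m ∈ cvr.map Prod.fst → m < F)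
    (l1 l2 : List (CVRRow I)) (wcol lcol : List Bool) (out : List (CVRRow I))
    (e1 : l1 = dedupRows ([] : List (I ⊕ ℕ)) F cvr)
    (e2 : l2 = l1.take S ++ (List.range (S - l1.length)).map
      (fun t => ((Sum.inr (F + S + t) : I ⊕ ℕ), false, false)))
    (e3 : wcol = adjustCol (l2.map (fun r => r.2.1)) Wtab)
    (e4 : lcol = adjustCol (l2.map (fun r => r.2.2)) Ltab)
    (e5 : out = (l2.map (fun r => r.1)).zip (wcol.zip lcol)) :
    out.length = S ∧ (out.map Prod.fst).Nodup ∧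
      out.countP (fun r => r.2.1) = Wtab ∧ out.countP (fun r => r.2.2) = Ltab := by
  subst e1 e2 e3 e4 e5
  obtain ⟨hnd1, -, hbd1⟩ := dedupRows_ids ([] : List (I ⊕ ℕ)) F cvr hF (by simp)
  set l1 := dedupRows ([] : List (I ⊕ ℕ)) F cvr with hl1def
  have h1len : l1.length = cvr.length := dedupRows_length _ _ _
  set l2 := l1.take S ++ (List.range (S - l1.length)).map
      (fun t => ((Sum.inr (F + S + t) : I ⊕ ℕ), false, false)) with hl2def
  have hl2len : l2.length = S := by
    rw [hl2def, List.length_append, List.length_take, List.length_map, List.length_range]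
    omega
  set wcol := adjustCol (l2.map (fun r => r.2.1)) Wtab with hwdef
  set lcol := adjustCol (l2.map (fun r => r.2.2)) Ltab with hldef
  have hwlen : wcol.length = S := by
    rw [hwdef, adjustCol_length, List.length_map, hl2len]
  have hllen : lcol.length = S := by
    rw [hldef, adjustCol_length, List.length_map, hl2len]
  have hwcnt : wcol.count true = Wtab :=
    adjustCol_count _ _ (by rw [List.length_map, hl2len]; exact hW)
  have hlcnt : lcol.count true = Ltab :=
    adjustCol_count _ _ (by rw [List.length_map, hl2len]; exact hL)
  have hidlen : (l2.map (fun r => r.1)).length = S := by rw [List.length_map, hl2len]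
  have hzlen : (wcol.zip lcol).length = S := by
    rw [List.length_zip, hwlen, hllen, min_self]
  set out := (l2.map (fun r => r.1)).zip (wcol.zip lcol) with houtdef
  have houtlen : out.length = S := by
    rw [houtdef, List.length_zip, hidlen, hzlen, min_self]
  have hnd : (l2.map (fun r => r.1)).Nodup := by
    rw [hl2def, List.map_append, List.map_take, List.map_map]
    rw [List.nodup_append]
    refine ⟨(List.take_sublist _ _).nodup hnd1, ?_, ?_⟩
    · refine List.Nodup.map ?_ List.nodup_range
      intro a b hab
      simp only [Function.comp_apply, Sum.inr.injEq] at hab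
      omega
    · intro a ha a' hb rfl
      simp only [List.mem_map, List.mem_range, Function.comp_apply] at hb
      obtain ⟨t, ht, rfl⟩ := hb
      have ha' := List.mem_of_mem_take ha
      have := hbd1 _ ha'
      omega
  have hmapfst : out.map Prod.fst = l2.map (fun r => r.1) := by
    apply List.map_fst_zip
    rw [hidlen, hzlen]
  have hsnd : out.map Prod.snd = wcol.zip lcol := by
    apply List.map_snd_zip
    rw [hidlen, hzlen]
  have hwc : out.map (fun r => r.2.1) = wcol := by
    have h : out.map (fun r => r.2.1) = (out.map Prod.snd).map Prod.fst := by
      rw [List.map_map]; rfl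
    rw [h, hsnd]
    exact List.map_fst_zip (by rw [hwlen, hllen])
  have hlc : out.map (fun r => r.2.2) = lcol := by
    have h : out.map (fun r => r.2.2) = (out.map Prod.snd).map Prod.snd := by
      rw [List.map_map]; rfl
    rw [h, hsnd]
    exact List.map_snd_zip (by rw [hwlen, hllen])
  refine ⟨houtlen, ?_, ?_, ?_⟩
  · rw [hmapfst]; exact hnd
  · have h := List.countP_map (p := fun b => b) (f := fun r : CVRRow I => r.2.1) (l := out)
    rw [hwc, countP_id_eq_count, hwcnt] at h
    exact h.symm
  · have h := List.countP_map (p := fun b => b) (f := fun r : CVRRow I => r.2.2) (l := out)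
    rw [hlc, countP_id_eq_count, hlcnt] at h
    exact h.symm


/-- `T_Force` always outputs a uniquely-labeled CVR of size exactly `S^act_β` whose
declared totals equal `W^tab_β` and `L^tab_β`, provided `W^tab_β ≤ S^act_β` and
`L^tab_β ≤ S^act_β`. -/
theorem forceCVR_spec {I : Type*} [DecidableEq I]
    (S Wtab Ltab : ℕ) (hW : Wtab ≤ S) (hL : Ltab ≤ S)
    (cvr : List (CVRRow I)) :
    (forceCVR S Wtab Ltab cvr).length = S ∧
    ((forceCVR S Wtab Ltab cvr).map Prod.fst).Nodup ∧
    ((forceCVR S Wtab Ltab cvr).countP (fun r => r.2.1)) = Wtab ∧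
    ((forceCVR S Wtab Ltab cvr).countP (fun r => r.2.2)) = Ltab := by
  have hF : ∀ m, Sum.inr m ∈ cvr.map Prod.fst →
      m < (cvr.filterMap (fun r => match r.1 with
        | Sum.inr n => some n
        | Sum.inl _ => none)).foldr max 0 + 1 := by
    intro m hm
    simp only [List.mem_map] at hm
    obtain ⟨r, hr, hr1⟩ := hm
    have hmem : m ∈ cvr.filterMap (fun r => match r.1 with
        | Sum.inr n => some n
        | Sum.inl _ => none) := by
      rw [List.mem_filterMap]
      exact ⟨r, hr, by rw [hr1]⟩
    have := mem_le_foldr_max _ _ hmem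
    omega
  exact force_aux S Wtab Ltab _ hW hL cvr hF _ _ _ _ _ rfl rfl rfl rfl rfl
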